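/- Let C be a bounded convex subset with diameter at most M ∈ ℤ₊ of a W-hyperbolic space, T : C → C nonexpansive, and (x_n) the Halpern iteration with λ_n = 1/(n+1). Then for all ε ∈ (0,1): d(x_n, x_{n+1}) ≤ ε for all n ≥ ⌈2M/ε + 8M²/ε²⌉ − 1, and d(x_n, Tx_n) ≤ ε for all n ≥ ⌈4M/ε + 16M²/ε²⌉ − 1. -/

import Mathlib

structure WHyperbolic (X : Type*) [MetricSpace X] where
  W : X → X → ℝ → X
  W1 : ∀ (x y z : X) (l : ℝ), l ∈ Set.Icc (0:ℝ) 1 →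
    dist z (W x y l) ≤ (1 - l) * dist z x + l * dist z y
  W2 : ∀ (x y : X) (l l' : ℝ), l ∈ Set.Icc (0:ℝ) 1 → l' ∈ Set.Icc (0:ℝ) 1 →
    dist (W x y l) (W x y l') = |l - l'| * dist x y
  W3 : ∀ (x y : X) (l : ℝ), l ∈ Set.Icc (0:ℝ) 1 → W x y l = W y x (1 - l)
  W4 : ∀ (x y z w : X) (l : ℝ), l ∈ Set.Icc (0:ℝ) 1 →
    dist (W x z l) (W y w l) ≤ (1 - l) * dist x y + l * dist z w

set_option maxHeartbeats 1000000 in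
theorem stmt13 {X : Type*} [MetricSpace X] (H : WHyperbolic X) (C : Set X)
    (hconv : ∀ x ∈ C, ∀ y ∈ C, ∀ l : ℝ, l ∈ Set.Icc (0:ℝ) 1 → H.W x y l ∈ C)
    (M : ℕ) (hM : 0 < M) (hdiam : ∀ a ∈ C, ∀ b ∈ C, dist a b ≤ M)
    (T : X → X) (hTC : ∀ x ∈ C, T x ∈ C)
    (hT : ∀ x ∈ C, ∀ y ∈ C, dist (T x) (T y) ≤ dist x y)
    (u x0 : X) (hu : u ∈ C) (hx0 : x0 ∈ C)
    (x : ℕ → X) (hx : x 0 = x0)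
    (hiter : ∀ n : ℕ, x (n+1) = H.W u (T (x n)) (1 - 1 / ((n:ℝ) + 2))) :
    ∀ ε : ℝ, ε ∈ Set.Ioo (0:ℝ) 1 →
      (∀ n : ℕ, ⌈2 * M / ε + 8 * (M:ℝ)^2 / ε^2⌉₊ - 1 ≤ n → dist (x n) (x (n+1)) ≤ ε) ∧
      (∀ n : ℕ, ⌈4 * M / ε + 16 * (M:ℝ)^2 / ε^2⌉₊ - 1 ≤ n → dist (x n) (T (x n)) ≤ ε) := by
  have hl : ∀ n : ℕ, (1 - 1/((n:ℝ)+2)) ∈ Set.Icc (0:ℝ) 1 := by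
    intro n
    have h1 : (0:ℝ) < (n:ℝ)+2 := by positivity
    constructor
    · have : 1/((n:ℝ)+2) ≤ 1 := by rw [div_le_one h1]; linarith
      linarith
    · have : 0 ≤ 1/((n:ℝ)+2) := by positivity
      linarith
  have hmem : ∀ n, x n ∈ C := by
    intro n
    induction n with
    | zero => rw [hx]; exact hx0
    | succ n ih =>
      rw [hiter n]
      exact hconv u hu _ (hTC _ ih) _ (hl n)
  have hM1 : (1:ℝ) ≤ (M:ℝ) := by exact_mod_cast hM
  -- W p q 1 = q
  have hW1 : ∀ p q : X, H.W p q 1 = q := by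
    intro p q
    have h := H.W1 p q q 1 (by norm_num)
    norm_num at h
    exact h.symm
  -- key recurrence
  have key : ∀ n : ℕ, ((n:ℝ)+2) * dist (x (n+1)) (x (n+2)) ≤
      ((n:ℝ)+1) * dist (x n) (x (n+1)) + (M:ℝ)/((n:ℝ)+3) := by
    intro n
    have h2 : (0:ℝ) < (n:ℝ)+2 := by positivity
    have h3 : (0:ℝ) < (n:ℝ)+3 := by positivity
    have hl' : (1 - 1/((n:ℝ)+3)) ∈ Set.Icc (0:ℝ) 1 := by
      constructor
      · have : 1/((n:ℝ)+3) ≤ 1 := by rw [div_le_one h3]; linarith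
        linarith
      · have : 0 ≤ 1/((n:ℝ)+3) := by positivity
        linarith
    have hx2 : x (n+2) = H.W u (T (x (n+1))) (1 - 1/((n:ℝ)+3)) := by
      have h := hiter (n+1)
      push_cast at h
      rw [show (n:ℝ)+1+2 = (n:ℝ)+3 by ring] at h
      exact h
    have hx1 : x (n+1) = H.W u (T (x n)) (1 - 1/((n:ℝ)+2)) := hiter n
    have e1 := H.W4 u u (T (x n)) (T (x (n+1))) (1 - 1/((n:ℝ)+2)) (hl n)
    rw [dist_self] at e1
    have e2 := H.W2 u (T (x (n+1))) (1 - 1/((n:ℝ)+2)) (1 - 1/((n:ℝ)+3)) (hl n) hl'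
    have habs : |(1 - 1/((n:ℝ)+2)) - (1 - 1/((n:ℝ)+3))| = 1/((n:ℝ)+2) - 1/((n:ℝ)+3) := by
      rw [abs_sub_comm, abs_of_nonneg]
      · ring
      · have : 1/((n:ℝ)+3) ≤ 1/((n:ℝ)+2) := by
          apply one_div_le_one_div_of_le h2; linarith
        linarith
    rw [habs] at e2
    have hTn := hT (x n) (hmem n) (x (n+1)) (hmem (n+1))
    have hdu : dist u (T (x (n+1))) ≤ (M:ℝ) := hdiam u hu _ (hTC _ (hmem (n+1)))
    have step : dist (x (n+1)) (x (n+2)) ≤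
        (1 - 1/((n:ℝ)+2)) * dist (x n) (x (n+1)) + (1/((n:ℝ)+2) - 1/((n:ℝ)+3)) * M := by
      rw [← hx1] at e1
      rw [← hx2] at e2
      have htri := dist_triangle (x (n+1)) (H.W u (T (x (n+1))) (1 - 1/((n:ℝ)+2))) (x (n+2))
      have hc1 : (0:ℝ) ≤ 1 - 1/((n:ℝ)+2) := (hl n).1
      have hc2 : (0:ℝ) ≤ 1/((n:ℝ)+2) - 1/((n:ℝ)+3) := by
        have : 1/((n:ℝ)+3) ≤ 1/((n:ℝ)+2) := by
          apply one_div_le_one_div_of_le h2; linarith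
        linarith
      have m1 := mul_le_mul_of_nonneg_left hTn hc1
      have m2 := mul_le_mul_of_nonneg_left hdu hc2
      linarith
    calc ((n:ℝ)+2) * dist (x (n+1)) (x (n+2))
        ≤ ((n:ℝ)+2) * ((1 - 1/((n:ℝ)+2)) * dist (x n) (x (n+1))
            + (1/((n:ℝ)+2) - 1/((n:ℝ)+3)) * M) := by
          exact mul_le_mul_of_nonneg_left step (by positivity)
      _ = ((n:ℝ)+1) * dist (x n) (x (n+1)) + (M:ℝ)/((n:ℝ)+3) := by
          field_simp
          ring
  -- telescoping
  have tele : ∀ m n : ℕ, m ≤ n → ((n:ℝ)+1) * dist (x n) (x (n+1)) ≤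
      ((m:ℝ)+1) * dist (x m) (x (m+1)) + ((n:ℝ) - (m:ℝ)) * ((M:ℝ)/((m:ℝ)+3)) := by
    intro m n hmn
    induction n, hmn using Nat.le_induction with
    | base => simp
    | succ n hmn ih =>
      have hk := key n
      have hmono : (M:ℝ)/((n:ℝ)+3) ≤ (M:ℝ)/((m:ℝ)+3) := by
        have hc : (m:ℝ) ≤ (n:ℝ) := by exact_mod_cast hmn
        gcongr
      have hdist : ((n:ℝ)+1 - (m:ℝ)) * ((M:ℝ)/((m:ℝ)+3))
          = ((n:ℝ) - (m:ℝ)) * ((M:ℝ)/((m:ℝ)+3)) + (M:ℝ)/((m:ℝ)+3) := by ring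
      push_cast
      linarith
  -- main estimate
  have est : ∀ m n : ℕ, m ≤ n → dist (x n) (x (n+1)) ≤
      ((m:ℝ)+1)*(M:ℝ)/((n:ℝ)+1) + (M:ℝ)/((m:ℝ)+3) := by
    intro m n hmn
    have ht := tele m n hmn
    have ham : dist (x m) (x (m+1)) ≤ (M:ℝ) := hdiam _ (hmem m) _ (hmem (m+1))
    have hN : (0:ℝ) < (n:ℝ)+1 := by positivity
    have hMd : (0:ℝ) ≤ (M:ℝ)/((m:ℝ)+3) := by positivity
    have hnm : ((n:ℝ) - (m:ℝ)) ≤ (n:ℝ)+1 := by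
      have : (0:ℝ) ≤ (m:ℝ) := Nat.cast_nonneg m
      linarith
    have h1 : ((n:ℝ)+1) * dist (x n) (x (n+1)) ≤ ((m:ℝ)+1)*(M:ℝ) + ((n:ℝ)+1)*((M:ℝ)/((m:ℝ)+3)) := by
      have ha := mul_le_mul_of_nonneg_left ham (show (0:ℝ) ≤ (m:ℝ)+1 by positivity)
      have hb := mul_le_mul_of_nonneg_right hnm hMd
      linarith
    have h3 : (((m:ℝ)+1)*(M:ℝ)/((n:ℝ)+1) + (M:ℝ)/((m:ℝ)+3)) * ((n:ℝ)+1)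
        = ((m:ℝ)+1)*(M:ℝ) + ((n:ℝ)+1)*((M:ℝ)/((m:ℝ)+3)) := by
      field_simp
    refine le_of_mul_le_mul_right ?_ hN
    calc dist (x n) (x (n+1)) * ((n:ℝ)+1) = ((n:ℝ)+1) * dist (x n) (x (n+1)) := by ring
      _ ≤ ((m:ℝ)+1)*(M:ℝ) + ((n:ℝ)+1)*((M:ℝ)/((m:ℝ)+3)) := h1
      _ = (((m:ℝ)+1)*(M:ℝ)/((n:ℝ)+1) + (M:ℝ)/((m:ℝ)+3)) * ((n:ℝ)+1) := h3.symm
  -- distance to T x n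
  have hxT : ∀ n : ℕ, dist (x (n+1)) (T (x n)) ≤ (M:ℝ)/((n:ℝ)+2) := by
    intro n
    have h2 : (0:ℝ) < (n:ℝ)+2 := by positivity
    have hW2 := H.W2 u (T (x n)) (1 - 1/((n:ℝ)+2)) 1 (hl n) (by norm_num)
    rw [hW1] at hW2
    have habs : |(1 - 1/((n:ℝ)+2)) - 1| = 1/((n:ℝ)+2) := by
      rw [show (1 - 1/((n:ℝ)+2)) - 1 = -(1/((n:ℝ)+2)) by ring, abs_neg,
        abs_of_nonneg (by positivity)]
    rw [hiter n, hW2, habs]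
    have hdu : dist u (T (x n)) ≤ (M:ℝ) := hdiam u hu _ (hTC _ (hmem n))
    calc 1/((n:ℝ)+2) * dist u (T (x n)) ≤ 1/((n:ℝ)+2) * (M:ℝ) := by
          gcongr
      _ = (M:ℝ)/((n:ℝ)+2) := by ring
  intro ε hε
  obtain ⟨hε0, hε1⟩ := hε
  have hεM : ε ≤ (M:ℝ) := le_trans (le_of_lt hε1) hM1
  constructor
  · intro n hn
    set m := ⌈2*(M:ℝ)/ε⌉₊ with hm
    have hmge : 2*(M:ℝ)/ε ≤ (m:ℝ) := Nat.le_ceil _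
    have hmle : (m:ℝ) ≤ 2*(M:ℝ)/ε + 1 := le_of_lt (Nat.ceil_lt_add_one (by positivity))
    have hN : 2*(M:ℝ)/ε + 8*(M:ℝ)^2/ε^2 ≤ (n:ℝ)+1 := by
      have h1 : ⌈2*(M:ℝ)/ε + 8*(M:ℝ)^2/ε^2⌉₊ ≤ n+1 := by omega
      calc 2*(M:ℝ)/ε + 8*(M:ℝ)^2/ε^2 ≤ (⌈2*(M:ℝ)/ε + 8*(M:ℝ)^2/ε^2⌉₊ : ℝ) := Nat.le_ceil _
        _ ≤ (n:ℝ)+1 := by exact_mod_cast h1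
    have h8 : (8:ℝ) ≤ 8*(M:ℝ)^2/ε^2 := by
      rw [le_div_iff₀ (by positivity)]
      have ha : ε*ε ≤ 1 := mul_le_one₀ hε1.le hε0.le hε1.le
      have hb : (1:ℝ) ≤ (M:ℝ)*(M:ℝ) := by
        have := mul_le_mul hM1 hM1 zero_le_one (le_trans zero_le_one hM1)
        linarith
      linarith only [ha, hb]
    have h2M : (0:ℝ) ≤ 2*(M:ℝ)/ε := by positivity
    have hmn : m ≤ n := by
      have hr : (m:ℝ) < (n:ℝ)+1 := by linarith
      have : m < n+1 := by exact_mod_cast hr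
      omega
    have hest := est m n hmn
    have hεm : 2*(M:ℝ) ≤ ε*(m:ℝ) := by
      have := (div_le_iff₀ hε0).mp hmge
      linarith
    have hεm2 : ε*(m:ℝ) ≤ 2*(M:ℝ) + ε := by
      have hmul := mul_le_mul_of_nonneg_left hmle hε0.le
      have he : ε*(2*(M:ℝ)/ε + 1) = 2*(M:ℝ) + ε := by field_simp
      linarith
    have hNε : 2*(M:ℝ)*ε + 8*(M:ℝ)^2 ≤ ε^2*((n:ℝ)+1) := by
      have hmul := mul_le_mul_of_nonneg_left hN (show (0:ℝ) ≤ ε^2 by positivity)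
      have he : ε^2*(2*(M:ℝ)/ε + 8*(M:ℝ)^2/ε^2) = 2*(M:ℝ)*ε + 8*(M:ℝ)^2 := by
        field_simp
      linarith
    have h1 : (M:ℝ)/((m:ℝ)+3) ≤ ε/2 := by
      rw [div_le_iff₀ (by positivity)]
      linarith
    have h2 : ((m:ℝ)+1)*(M:ℝ)/((n:ℝ)+1) ≤ ε/2 := by
      rw [div_le_iff₀ (show (0:ℝ) < (n:ℝ)+1 by positivity)]
      have hh := mul_le_mul_of_nonneg_left hεm2 (show (0:ℝ) ≤ 2*(M:ℝ) by positivity)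
      have hMe : (M:ℝ)*ε ≤ (M:ℝ)*(M:ℝ) :=
        mul_le_mul_of_nonneg_left (le_trans hε1.le hM1) (by positivity)
      have hkey : ε*(2*(((m:ℝ)+1)*(M:ℝ))) ≤ ε*(ε*((n:ℝ)+1)) := by linarith only [hh, hMe, hNε, mul_self_nonneg (M:ℝ)]
      have := le_of_mul_le_mul_left hkey hε0
      linarith
    linarith
  · intro n hn
    set m := ⌈4*(M:ℝ)/ε⌉₊ with hm
    have hmge : 4*(M:ℝ)/ε ≤ (m:ℝ) := Nat.le_ceil _
    have hmle : (m:ℝ) ≤ 4*(M:ℝ)/ε + 1 := le_of_lt (Nat.ceil_lt_add_one (by positivity))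
    have hN : 4*(M:ℝ)/ε + 16*(M:ℝ)^2/ε^2 ≤ (n:ℝ)+1 := by
      have h1 : ⌈4*(M:ℝ)/ε + 16*(M:ℝ)^2/ε^2⌉₊ ≤ n+1 := by omega
      calc 4*(M:ℝ)/ε + 16*(M:ℝ)^2/ε^2 ≤ (⌈4*(M:ℝ)/ε + 16*(M:ℝ)^2/ε^2⌉₊ : ℝ) := Nat.le_ceil _
        _ ≤ (n:ℝ)+1 := by exact_mod_cast h1
    have h16 : (16:ℝ) ≤ 16*(M:ℝ)^2/ε^2 := by
      rw [le_div_iff₀ (by positivity)]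
      have ha : ε*ε ≤ 1 := mul_le_one₀ hε1.le hε0.le hε1.le
      have hb : (1:ℝ) ≤ (M:ℝ)*(M:ℝ) := by
        have := mul_le_mul hM1 hM1 zero_le_one (le_trans zero_le_one hM1)
        linarith
      linarith only [ha, hb]
    have h4M : (0:ℝ) ≤ 4*(M:ℝ)/ε := by positivity
    have hmn : m ≤ n := by
      have hr : (m:ℝ) < (n:ℝ)+1 := by linarith
      have : m < n+1 := by exact_mod_cast hr
      omega
    have hest := est m n hmn
    have hεm : 4*(M:ℝ) ≤ ε*(m:ℝ) := by
      have := (div_le_iff₀ hε0).mp hmge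
      linarith
    have hεm2 : ε*(m:ℝ) ≤ 4*(M:ℝ) + ε := by
      have hmul := mul_le_mul_of_nonneg_left hmle hε0.le
      have he : ε*(4*(M:ℝ)/ε + 1) = 4*(M:ℝ) + ε := by field_simp
      linarith
    have hNε : 4*(M:ℝ)*ε + 16*(M:ℝ)^2 ≤ ε^2*((n:ℝ)+1) := by
      have hmul := mul_le_mul_of_nonneg_left hN (show (0:ℝ) ≤ ε^2 by positivity)
      have he : ε^2*(4*(M:ℝ)/ε + 16*(M:ℝ)^2/ε^2) = 4*(M:ℝ)*ε + 16*(M:ℝ)^2 := by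
        field_simp
      linarith
    have h1 : (M:ℝ)/((m:ℝ)+3) ≤ ε/4 := by
      rw [div_le_iff₀ (by positivity)]
      linarith
    have h2 : ((m:ℝ)+1)*(M:ℝ)/((n:ℝ)+1) ≤ ε/2 := by
      rw [div_le_iff₀ (show (0:ℝ) < (n:ℝ)+1 by positivity)]
      have hh := mul_le_mul_of_nonneg_left hεm2 (show (0:ℝ) ≤ 2*(M:ℝ) by positivity)
      have hMe : (M:ℝ)*ε ≤ (M:ℝ)*(M:ℝ) :=
        mul_le_mul_of_nonneg_left (le_trans hε1.le hM1) (by positivity)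
      have hkey : ε*(2*(((m:ℝ)+1)*(M:ℝ))) ≤ ε*(ε*((n:ℝ)+1)) := by linarith only [hh, hMe, hNε, mul_self_nonneg (M:ℝ)]
      have := le_of_mul_le_mul_left hkey hε0
      linarith
    have h3 : (M:ℝ)/((n:ℝ)+2) ≤ ε/4 := by
      rw [div_le_iff₀ (show (0:ℝ) < (n:ℝ)+2 by positivity)]
      have hεN : 4*(M:ℝ) ≤ ε*((n:ℝ)+1) := by
        have hdiv : 4*(M:ℝ)/ε ≤ (n:ℝ)+1 := by linarith only [hN, h16]
        have := (div_le_iff₀ hε0).mp hdiv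
        linarith
      linarith
    have htri : dist (x n) (T (x n)) ≤ dist (x n) (x (n+1)) + dist (x (n+1)) (T (x n)) :=
      dist_triangle _ _ _
    have hT2 := hxT n
    linarith
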